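/- If A and B are subsets of {1,…,n} with |A| = |B|, then there exists a 132-avoiding permutation π ∈ S_n with π(A) = B. -/

import Mathlib

/-- `π` contains the pattern 132: indices `i₁ < i₂ < i₃` with `π i₁ < π i₃ < π i₂`. -/
def Contains132 {n : ℕ} (π : Equiv.Perm (Fin n)) : Prop :=
  ∃ i₁ i₂ i₃ : Fin n, i₁ < i₂ ∧ i₂ < i₃ ∧ π i₁ < π i₃ ∧ π i₃ < π i₂

/-- Build a function on `Fin n` from perms on `Fin a` and `Fin b`, `n = a+1+b`:
positions `< a` go to the value block `[b, a+b)`, position `a` to the max `a+b`,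
positions `> a` to `[0, b)`. -/
def bf (n a b : ℕ) (hab : a + 1 + b = n) (π₁ : Equiv.Perm (Fin a))
    (π₂ : Equiv.Perm (Fin b)) : Fin n → Fin n := fun i =>
  if h : (i : ℕ) < a then
    ⟨b + (π₁ ⟨i.val, h⟩).val, by have := (π₁ ⟨i.val, h⟩).isLt; omega⟩
  else if h2 : (i : ℕ) = a then ⟨a + b, by omega⟩
  else ⟨(π₂ ⟨i.val - (a+1), by have := i.isLt; omega⟩).val,
    by have := (π₂ ⟨i.val - (a+1), by have := i.isLt; omega⟩).isLt; omega⟩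

lemma bf_val₁ {n a b hab π₁ π₂} {i : Fin n} (h : (i : ℕ) < a) :
    (bf n a b hab π₁ π₂ i).val = b + (π₁ ⟨i.val, h⟩).val := by
  simp [bf, dif_pos h]

lemma bf_val₂ {n a b hab π₁ π₂} {i : Fin n} (h : (i : ℕ) = a) :
    (bf n a b hab π₁ π₂ i).val = a + b := by
  simp [bf, dif_neg (by omega : ¬ (i:ℕ) < a), dif_pos h]

lemma bf_val₃ {n a b hab π₁ π₂} {i : Fin n} (h : a < (i : ℕ)) :
    (bf n a b hab π₁ π₂ i).val
      = (π₂ ⟨i.val - (a+1), by have := i.isLt; omega⟩).val := by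
  simp [bf, dif_neg (by omega : ¬ (i:ℕ) < a), dif_neg (by omega : ¬ (i:ℕ) = a)]

lemma bf_inj (n a b : ℕ) (hab : a + 1 + b = n) (π₁ : Equiv.Perm (Fin a))
    (π₂ : Equiv.Perm (Fin b)) : Function.Injective (bf n a b hab π₁ π₂) := by
  intro i j h
  have hv : (bf n a b hab π₁ π₂ i).val = (bf n a b hab π₁ π₂ j).val := congrArg Fin.val h
  rcases lt_trichotomy (i : ℕ) a with hi | hi | hi <;>
    rcases lt_trichotomy (j : ℕ) a with hj | hj | hj
  · rw [bf_val₁ hi, bf_val₁ hj] at hv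
    have : π₁ ⟨i.val, hi⟩ = π₁ ⟨j.val, hj⟩ := Fin.ext (by omega)
    have h' := congrArg Fin.val (π₁.injective this)
    simp only at h'
    exact Fin.ext h'
  · rw [bf_val₁ hi, bf_val₂ hj] at hv
    have := (π₁ ⟨i.val, hi⟩).isLt; omega
  · rw [bf_val₁ hi, bf_val₃ hj] at hv
    have := (π₂ ⟨j.val - (a+1), by have := j.isLt; omega⟩).isLt; omega
  · rw [bf_val₂ hi, bf_val₁ hj] at hv
    have := (π₁ ⟨j.val, hj⟩).isLt; omega
  · exact Fin.ext (by omega)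
  · rw [bf_val₂ hi, bf_val₃ hj] at hv
    have := (π₂ ⟨j.val - (a+1), by have := j.isLt; omega⟩).isLt; omega
  · rw [bf_val₃ hi, bf_val₁ hj] at hv
    have := (π₂ ⟨i.val - (a+1), by have := i.isLt; omega⟩).isLt; omega
  · rw [bf_val₃ hi, bf_val₂ hj] at hv
    have := (π₂ ⟨i.val - (a+1), by have := i.isLt; omega⟩).isLt; omega
  · rw [bf_val₃ hi, bf_val₃ hj] at hv
    have : π₂ ⟨i.val - (a+1), by have := i.isLt; omega⟩
        = π₂ ⟨j.val - (a+1), by have := j.isLt; omega⟩ := Fin.ext hv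
    have := congrArg Fin.val (π₂.injective this)
    simp only at this
    exact Fin.ext (by omega)

noncomputable def bperm (n a b : ℕ) (hab : a + 1 + b = n) (π₁ : Equiv.Perm (Fin a))
    (π₂ : Equiv.Perm (Fin b)) : Equiv.Perm (Fin n) :=
  Equiv.ofBijective _ (Finite.injective_iff_bijective.mp (bf_inj n a b hab π₁ π₂))

lemma bperm_apply (n a b hab π₁ π₂) (i : Fin n) :
    bperm n a b hab π₁ π₂ i = bf n a b hab π₁ π₂ i := rfl

lemma bf_val_le {n a b hab π₁ π₂} (i : Fin n) :
    (bf n a b hab π₁ π₂ i).val ≤ a + b := by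
  rcases lt_trichotomy (i : ℕ) a with hi | hi | hi
  · rw [bf_val₁ hi]; have := (π₁ ⟨i.val, hi⟩).isLt; omega
  · rw [bf_val₂ hi]
  · rw [bf_val₃ hi]
    have := (π₂ ⟨i.val - (a+1), by have := i.isLt; omega⟩).isLt; omega

lemma bperm_avoid (n a b hab π₁ π₂) (h1 : ¬ Contains132 π₁) (h2 : ¬ Contains132 π₂) :
    ¬ Contains132 (bperm n a b hab π₁ π₂) := by
  rintro ⟨i₁, i₂, i₃, h12, h23, hv13, hv32⟩
  have hv13 : (bf n a b hab π₁ π₂ i₁).val < (bf n a b hab π₁ π₂ i₃).val := hv13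
  have hv32 : (bf n a b hab π₁ π₂ i₃).val < (bf n a b hab π₁ π₂ i₂).val := hv32
  rw [Fin.lt_def] at h12 h23
  by_cases c1 : (i₁ : ℕ) < a
  · by_cases c3 : (i₃ : ℕ) < a
    · have c2 : (i₂ : ℕ) < a := by omega
      rw [bf_val₁ c1, bf_val₁ c3] at hv13
      rw [bf_val₁ c3, bf_val₁ c2] at hv32
      exact h1 ⟨⟨i₁, c1⟩, ⟨i₂, c2⟩, ⟨i₃, c3⟩, Fin.mk_lt_mk.mpr h12, Fin.mk_lt_mk.mpr h23, by rw [Fin.lt_def]; omega, by rw [Fin.lt_def]; omega⟩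
    · by_cases c3' : (i₃ : ℕ) = a
      · rw [bf_val₂ c3'] at hv32
        have := bf_val_le (hab := hab) (π₁ := π₁) (π₂ := π₂) i₂; omega
      · have c3'' : a < (i₃ : ℕ) := by omega
        rw [bf_val₁ c1, bf_val₃ c3''] at hv13
        have := (π₂ ⟨i₃.val - (a+1), by have := i₃.isLt; omega⟩).isLt; omega
  · by_cases c1' : (i₁ : ℕ) = a
    · rw [bf_val₂ c1'] at hv13
      have := bf_val_le (hab := hab) (π₁ := π₁) (π₂ := π₂) i₃; omega
    · have d1 : a < (i₁ : ℕ) := by omega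
      have d2 : a < (i₂ : ℕ) := by omega
      have d3 : a < (i₃ : ℕ) := by omega
      rw [bf_val₃ d1, bf_val₃ d3] at hv13
      rw [bf_val₃ d3, bf_val₃ d2] at hv32
      exact h2 ⟨⟨i₁.val - (a+1), by have := i₁.isLt; omega⟩,
        ⟨i₂.val - (a+1), by have := i₂.isLt; omega⟩,
        ⟨i₃.val - (a+1), by have := i₃.isLt; omega⟩,
        by rw [Fin.lt_def]; simp; omega, by rw [Fin.lt_def]; simp; omega,
        by rw [Fin.lt_def]; omega, by rw [Fin.lt_def]; omega⟩

def gA (n k : ℕ) (A : Finset (Fin n)) : ℕ := (A.filter (fun x => x.val < k)).card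
def gB (n k : ℕ) (B : Finset (Fin n)) : ℕ :=
  (B.filter (fun y => n - 1 - k ≤ y.val ∧ y.val < n - 1)).card

lemma card_filter_eq {n : ℕ} (A : Finset (Fin n)) (k : ℕ) (hk : k < n) :
    (A.filter (fun x => x.val = k)).card = if (⟨k, hk⟩ : Fin n) ∈ A then 1 else 0 := by
  split_ifs with h
  · rw [Finset.card_eq_one]
    refine ⟨⟨k, hk⟩, ?_⟩
    ext x
    simp only [Finset.mem_filter, Finset.mem_singleton]
    constructor
    · rintro ⟨-, hx⟩; exact Fin.ext hx
    · rintro rfl; exact ⟨h, rfl⟩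
  · rw [Finset.card_eq_zero]
    ext x
    simp only [Finset.mem_filter, Finset.notMem_empty, iff_false, not_and]
    intro hx hxk
    exact absurd (Fin.ext hxk (b := (⟨k, hk⟩ : Fin n)) ▸ hx) h

lemma gA_step {n : ℕ} (A : Finset (Fin n)) (k : ℕ) (hk : k < n) :
    gA n (k+1) A = gA n k A + (if (⟨k, hk⟩ : Fin n) ∈ A then 1 else 0) := by
  unfold gA
  rw [← card_filter_eq A k hk]
  rw [← Finset.card_union_of_disjoint (by
    simp only [Finset.disjoint_filter]
    intro x _ h1 h2
    omega)]
  congr 1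
  rw [← Finset.filter_or]
  apply Finset.filter_congr
  intro x _
  constructor <;> (intro; omega)

lemma gB_step {n : ℕ} (B : Finset (Fin n)) (k : ℕ) (hk : k + 1 < n) :
    gB n (k+1) B = gB n k B + (if (⟨n - 2 - k, by omega⟩ : Fin n) ∈ B then 1 else 0) := by
  unfold gB
  rw [← card_filter_eq B (n - 2 - k) (by omega)]
  rw [← Finset.card_union_of_disjoint (by
    simp only [Finset.disjoint_filter]
    intro x _ h1 h2
    omega)]
  congr 1
  rw [← Finset.filter_or]
  apply Finset.filter_congr
  intro x _
  constructor <;> (intro; omega)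

lemma cross (f g : ℕ → ℕ) : ∀ n : ℕ,
    (∀ k < n, f (k+1) = f k ∨ f (k+1) = f k + 1) →
    (∀ k < n, g (k+1) = g k ∨ g (k+1) = g k + 1) →
    f 0 = g 0 → g n < f n →
    ∃ k < n, f k = g k ∧ f (k+1) = f k + 1 ∧ g (k+1) = g k := by
  intro n
  induction n with
  | zero => intro _ _ h0 hend; omega
  | succ n ih =>
    intro hf hg h0 hend
    by_cases h : g n < f n
    · obtain ⟨k, hk, rest⟩ := ih (fun k hk => hf k (by omega)) (fun k hk => hg k (by omega)) h0 h
      exact ⟨k, by omega, rest⟩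
    · have h1 := hf n (by omega)
      have h2 := hg n (by omega)
      exact ⟨n, by omega, by omega, by omega, by omega⟩

lemma gA_top {n : ℕ} (hn : 0 < n) (A : Finset (Fin n)) :
    gA n (n-1) A = A.card - (if (⟨n-1, by omega⟩ : Fin n) ∈ A then 1 else 0) := by
  unfold gA
  split_ifs with h
  · have : A.filter (fun x => x.val < n - 1) = A.erase ⟨n-1, by omega⟩ := by
      ext x
      simp only [Finset.mem_filter, Finset.mem_erase]
      have := x.isLt
      constructor
      · rintro ⟨hx, hlt⟩
        refine ⟨fun e => ?_, hx⟩
        rw [e] at hlt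
        simp at hlt
      · rintro ⟨hne, hx⟩
        refine ⟨hx, ?_⟩
        rcases Nat.lt_or_ge x.val (n-1) with h' | h'
        · exact h'
        · exact absurd (Fin.ext (show x.val = n - 1 by omega)) hne
    rw [this, Finset.card_erase_of_mem h]
  · have : A.filter (fun x => x.val < n - 1) = A := by
      apply Finset.filter_true_of_mem
      intro x hx
      have := x.isLt
      rcases Nat.lt_or_ge x.val (n-1) with h' | h'
      · exact h'
      · exact absurd ((Fin.ext (show x.val = n-1 by omega) : x = ⟨n-1, by omega⟩) ▸ hx) h
    rw [this]; omega

lemma gB_top {n : ℕ} (hn : 0 < n) (B : Finset (Fin n)) :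
    gB n (n-1) B = B.card - (if (⟨n-1, by omega⟩ : Fin n) ∈ B then 1 else 0) := by
  unfold gB
  have : B.filter (fun y => n - 1 - (n-1) ≤ y.val ∧ y.val < n - 1)
      = B.filter (fun y => y.val < n - 1) := by
    apply Finset.filter_congr
    intro x _
    constructor <;> (intro; omega)
  rw [this]
  exact gA_top hn B

lemma gA_zero {n : ℕ} (A : Finset (Fin n)) : gA n 0 A = 0 := by
  unfold gA
  rw [Finset.card_eq_zero, Finset.filter_eq_empty_iff]
  intro x _; omega

lemma gB_zero {n : ℕ} (B : Finset (Fin n)) : gB n 0 B = 0 := by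
  unfold gB
  rw [Finset.card_eq_zero, Finset.filter_eq_empty_iff]
  intro x _; omega

lemma exists_k {n : ℕ} (hn : 0 < n) (A B : Finset (Fin n)) (hcard : A.card = B.card) :
    ∃ k, ∃ hk : k < n, gA n k A = gB n k B ∧
      ((⟨k, hk⟩ : Fin n) ∈ A ↔ (⟨n-1, by omega⟩ : Fin n) ∈ B) := by
  by_cases hB : (⟨n-1, by omega⟩ : Fin n) ∈ B
  · by_cases hA : (⟨n-1, by omega⟩ : Fin n) ∈ A
    · refine ⟨n-1, by omega, ?_, iff_of_true hA hB⟩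
      rw [gA_top hn A, gB_top hn B, if_pos hA, if_pos hB, hcard]
    · have hB1 : 1 ≤ B.card := Finset.card_pos.mpr ⟨_, hB⟩
      have hend : gB n (n-1) B < gA n (n-1) A := by
        rw [gA_top hn A, gB_top hn B, if_neg hA, if_pos hB]; omega
      obtain ⟨k, hk, heq, hstepf, -⟩ := cross (fun k => gA n k A) (fun k => gB n k B) (n-1)
        (fun k hk => by rw [gA_step A k (by omega)]; split_ifs <;> omega)
        (fun k hk => by rw [gB_step B k (by omega)]; split_ifs <;> omega)
        (by rw [gA_zero, gB_zero]) hend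
      have := gA_step A k (show k < n by omega)
      refine ⟨k, by omega, heq, ?_⟩
      split_ifs at this with hmem
      · exact iff_of_true hmem hB
      · omega
  · by_cases hA : (⟨n-1, by omega⟩ : Fin n) ∈ A
    · have hA1 : 1 ≤ A.card := Finset.card_pos.mpr ⟨_, hA⟩
      have hend : gA n (n-1) A < gB n (n-1) B := by
        rw [gA_top hn A, gB_top hn B, if_pos hA, if_neg hB]; omega
      obtain ⟨k, hk, heq, -, hstepg⟩ := cross (fun k => gB n k B) (fun k => gA n k A) (n-1)
        (fun k hk => by rw [gB_step B k (by omega)]; split_ifs <;> omega)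
        (fun k hk => by rw [gA_step A k (by omega)]; split_ifs <;> omega)
        (by rw [gA_zero, gB_zero]) hend
      have := gA_step A k (show k < n by omega)
      refine ⟨k, by omega, heq.symm, ?_⟩
      split_ifs at this with hmem
      · omega
      · exact iff_of_false hmem hB
    · refine ⟨n-1, by omega, ?_, iff_of_false hA hB⟩
      rw [gA_top hn A, gB_top hn B, if_neg hA, if_neg hB, hcard]
def blkA1 (n k : ℕ) (hk : k < n) (A : Finset (Fin n)) : Finset (Fin k) :=
  Finset.univ.filter (fun x => (⟨x.val, Nat.lt_trans x.isLt hk⟩ : Fin n) ∈ A)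
def blkB1 (n k : ℕ) (hk : k < n) (B : Finset (Fin n)) : Finset (Fin k) :=
  Finset.univ.filter (fun y =>
    (⟨(n-1-k) + y.val, by have := y.isLt; omega⟩ : Fin n) ∈ B)
def blkA2 (n k : ℕ) (hk : k < n) (A : Finset (Fin n)) : Finset (Fin (n-1-k)) :=
  Finset.univ.filter (fun x => (⟨k+1+x.val, by have := x.isLt; omega⟩ : Fin n) ∈ A)
def blkB2 (n k : ℕ) (B : Finset (Fin n)) : Finset (Fin (n-1-k)) :=
  Finset.univ.filter (fun y => (⟨y.val, by have := y.isLt; omega⟩ : Fin n) ∈ B)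

lemma blkA1_card (n k : ℕ) (hk : k < n) (A : Finset (Fin n)) :
    (blkA1 n k hk A).card = gA n k A := by
  apply Finset.card_bij (fun x _ => (⟨x.val, Nat.lt_trans x.isLt hk⟩ : Fin n))
  · intro x hx
    simp only [blkA1, Finset.mem_filter, Finset.mem_univ, true_and] at hx
    simp only [Finset.mem_filter]
    exact ⟨hx, x.isLt⟩
  · intro x _ y _ h
    have hv := congrArg Fin.val h
    simp only at hv
    exact Fin.ext hv
  · intro y hy
    simp only [Finset.mem_filter] at hy
    refine ⟨⟨y.val, hy.2⟩, ?_, Fin.ext rfl⟩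
    simp only [blkA1, Finset.mem_filter, Finset.mem_univ, true_and]
    simpa using hy.1

lemma blkB1_card (n k : ℕ) (hk : k < n) (B : Finset (Fin n)) :
    (blkB1 n k hk B).card = gB n k B := by
  apply Finset.card_bij (fun y _ => (⟨(n-1-k) + y.val, by have := y.isLt; omega⟩ : Fin n))
  · intro y hy
    simp only [blkB1, Finset.mem_filter, Finset.mem_univ, true_and] at hy
    simp only [Finset.mem_filter]
    have := y.isLt
    exact ⟨hy, by omega, by omega⟩
  · intro x _ y _ h
    have := congrArg Fin.val h
    simp only at this
    exact Fin.ext (by omega)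
  · intro y hy
    simp only [Finset.mem_filter] at hy
    obtain ⟨hyB, h1, h2⟩ := hy
    refine ⟨⟨y.val - (n-1-k), by omega⟩, ?_, Fin.ext (by simp; omega)⟩
    simp only [blkB1, Finset.mem_filter, Finset.mem_univ, true_and]
    have : (⟨(n-1-k) + (y.val - (n-1-k)), by omega⟩ : Fin n) = y := Fin.ext (by simp; omega)
    rw [this]
    exact hyB

lemma blkA2_card (n k : ℕ) (hk : k < n) (A : Finset (Fin n)) :
    (blkA2 n k hk A).card = (A.filter (fun x => k < x.val)).card := by
  apply Finset.card_bij (fun x _ => (⟨k+1+x.val, by have := x.isLt; omega⟩ : Fin n))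
  · intro x hx
    simp only [blkA2, Finset.mem_filter, Finset.mem_univ, true_and] at hx
    simp only [Finset.mem_filter]
    exact ⟨hx, by omega⟩
  · intro x _ y _ h
    have := congrArg Fin.val h
    simp only at this
    exact Fin.ext (by omega)
  · intro y hy
    simp only [Finset.mem_filter] at hy
    obtain ⟨hyA, h1⟩ := hy
    have hisLt := y.isLt
    refine ⟨⟨y.val - (k+1), by omega⟩, ?_, Fin.ext (by simp; omega)⟩
    simp only [blkA2, Finset.mem_filter, Finset.mem_univ, true_and]
    have : (⟨k+1+(y.val - (k+1)), by omega⟩ : Fin n) = y := Fin.ext (by simp; omega)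
    rw [this]
    exact hyA

lemma blkB2_card (n k : ℕ) (B : Finset (Fin n)) :
    (blkB2 n k B).card = (B.filter (fun x => x.val < n-1-k)).card := by
  apply Finset.card_bij (fun y _ => (⟨y.val, by have := y.isLt; omega⟩ : Fin n))
  · intro y hy
    simp only [blkB2, Finset.mem_filter, Finset.mem_univ, true_and] at hy
    simp only [Finset.mem_filter]
    exact ⟨hy, y.isLt⟩
  · intro x _ y _ h
    have hv := congrArg Fin.val h
    simp only at hv
    exact Fin.ext hv
  · intro y hy
    simp only [Finset.mem_filter] at hy
    refine ⟨⟨y.val, hy.2⟩, ?_, Fin.ext rfl⟩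
    simp only [blkB2, Finset.mem_filter, Finset.mem_univ, true_and]
    simpa using hy.1

lemma splitA {n k : ℕ} (hk : k < n) (A : Finset (Fin n)) :
    A.card = gA n k A + (if (⟨k, hk⟩ : Fin n) ∈ A then 1 else 0)
      + (A.filter (fun x => k < x.val)).card := by
  classical
  have h1 := Finset.card_filter_add_card_filter_not (s := A) (p := fun x => x.val < k)
  have h2 : A.filter (fun x => ¬ x.val < k)
      = A.filter (fun x => x.val = k) ∪ A.filter (fun x => k < x.val) := by
    rw [← Finset.filter_or]
    apply Finset.filter_congr
    intro x _
    constructor <;> (intro; omega)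
  have h3 : ((A.filter (fun x => x.val = k)) ∪ (A.filter (fun x => k < x.val))).card
      = (A.filter (fun x => x.val = k)).card + (A.filter (fun x => k < x.val)).card := by
    apply Finset.card_union_of_disjoint
    simp only [Finset.disjoint_filter]
    intro x _ h1 h2
    omega
  rw [h2, h3, card_filter_eq A k hk] at h1
  unfold gA
  omega

lemma splitB {n k : ℕ} (hn : 0 < n) (hk : k < n) (B : Finset (Fin n)) :
    B.card = (B.filter (fun x => x.val < n-1-k)).card + gB n k B
      + (if (⟨n-1, by omega⟩ : Fin n) ∈ B then 1 else 0) := by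
  classical
  have h1 := Finset.card_filter_add_card_filter_not (s := B)
    (p := fun x => x.val < n-1-k)
  have h2 : B.filter (fun x => ¬ x.val < n-1-k)
      = B.filter (fun y => n-1-k ≤ y.val ∧ y.val < n-1) ∪ B.filter (fun x => x.val = n-1) := by
    rw [← Finset.filter_or]
    apply Finset.filter_congr
    intro x _
    have := x.isLt
    constructor <;> (intro; omega)
  have h3 : ((B.filter (fun y => n-1-k ≤ y.val ∧ y.val < n-1)) ∪
        (B.filter (fun x => x.val = n-1))).card
      = (B.filter (fun y => n-1-k ≤ y.val ∧ y.val < n-1)).card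
        + (B.filter (fun x => x.val = n-1)).card := by
    apply Finset.card_union_of_disjoint
    simp only [Finset.disjoint_filter]
    intro x _ h1 h2
    omega
  rw [h2, h3, card_filter_eq B (n-1) (by omega)] at h1
  unfold gB
  omega

lemma mem_of_val_eq {n : ℕ} {A : Finset (Fin n)} {i : Fin n} (hiA : i ∈ A) (K : Fin n)
    (h : K.val = i.val) : K ∈ A := by
  rwa [show K = i from Fin.ext h]

lemma key (n : ℕ) : ∀ A B : Finset (Fin n), A.card = B.card →
    ∃ π : Equiv.Perm (Fin n), ¬ Contains132 π ∧ A.image π = B := by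
  induction n using Nat.strong_induction_on with
  | _ n ih =>
  intro A B hcard
  rcases Nat.eq_zero_or_pos n with rfl | hn
  · refine ⟨1, ?_, ?_⟩
    · rintro ⟨i, -⟩; exact i.elim0
    · have hA : A = ∅ := Finset.eq_empty_of_forall_notMem (fun x => x.elim0)
      have hB : B = ∅ := Finset.eq_empty_of_forall_notMem (fun x => x.elim0)
      rw [hA, hB, Finset.image_empty]
  obtain ⟨k, hk, hgk, hmax⟩ := exists_k hn A B hcard
  have hab : k + 1 + (n-1-k) = n := by omega
  have h1 : (blkA1 n k hk A).card = (blkB1 n k hk B).card := by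
    rw [blkA1_card, blkB1_card, hgk]
  have hA2B2 : (blkA2 n k hk A).card = (blkB2 n k B).card := by
    have hsA := splitA hk A
    have hsB := splitB hn hk B
    rw [blkA2_card, blkB2_card]
    by_cases hmem : (⟨k, hk⟩ : Fin n) ∈ A
    · rw [if_pos hmem] at hsA
      rw [if_pos (hmax.mp hmem)] at hsB
      omega
    · rw [if_neg hmem] at hsA
      rw [if_neg (fun hb => hmem (hmax.mpr hb))] at hsB
      omega
  obtain ⟨π₁, hin1, himg1⟩ := ih k (by omega) (blkA1 n k hk A) (blkB1 n k hk B) h1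
  obtain ⟨π₂, hin2, himg2⟩ := ih (n-1-k) (by omega) (blkA2 n k hk A) (blkB2 n k B) hA2B2
  refine ⟨bperm n k (n-1-k) hab π₁ π₂, bperm_avoid _ _ _ _ _ _ hin1 hin2, ?_⟩
  apply Finset.eq_of_subset_of_card_le
  · intro y hy
    obtain ⟨i, hiA, rfl⟩ := Finset.mem_image.mp hy
    rcases lt_trichotomy (i : ℕ) k with hi | hi | hi
    · have hx : (⟨i.val, hi⟩ : Fin k) ∈ blkA1 n k hk A := by
        simp only [blkA1, Finset.mem_filter, Finset.mem_univ, true_and]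
        exact mem_of_val_eq hiA _ rfl
      have hy1 : π₁ ⟨i.val, hi⟩ ∈ blkB1 n k hk B := himg1 ▸ Finset.mem_image_of_mem π₁ hx
      simp only [blkB1, Finset.mem_filter, Finset.mem_univ, true_and] at hy1
      have e : bperm n k (n-1-k) hab π₁ π₂ i
          = ⟨(n-1-k) + (π₁ ⟨i.val, hi⟩).val,
              by have := (π₁ ⟨i.val, hi⟩).isLt; omega⟩ := Fin.ext (bf_val₁ (hab := hab) hi)
      rw [e]
      exact hy1
    · have hiA' : (⟨k, hk⟩ : Fin n) ∈ A := mem_of_val_eq hiA _ (show k = i.val by omega)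
      have hmaxB := hmax.mp hiA'
      have e : bperm n k (n-1-k) hab π₁ π₂ i
          = ⟨k + (n-1-k), by omega⟩ := Fin.ext (bf_val₂ (hab := hab) hi)
      rw [e]
      exact mem_of_val_eq hmaxB _ (show k + (n-1-k) = n - 1 by omega)
    · have hilt := i.isLt
      have hx : (⟨i.val - (k+1), by omega⟩ : Fin (n-1-k)) ∈ blkA2 n k hk A := by
        simp only [blkA2, Finset.mem_filter, Finset.mem_univ, true_and]
        exact mem_of_val_eq hiA _ (show k+1+(i.val - (k+1)) = i.val by omega)
      have hy2 : π₂ ⟨i.val - (k+1), by omega⟩ ∈ blkB2 n k B :=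
        himg2 ▸ Finset.mem_image_of_mem π₂ hx
      simp only [blkB2, Finset.mem_filter, Finset.mem_univ, true_and] at hy2
      have e : bperm n k (n-1-k) hab π₁ π₂ i
          = ⟨(π₂ ⟨i.val - (k+1), by omega⟩).val,
              by have := (π₂ ⟨i.val - (k+1), by omega⟩).isLt; omega⟩ := Fin.ext (bf_val₃ (hab := hab) hi)
      rw [e]
      exact hy2
  · rw [Finset.card_image_of_injective _ (Equiv.injective _), hcard]

theorem stmt_2 (n : ℕ) (A B : Finset (Fin n)) (h : A.card = B.card) :
    ∃ π : Equiv.Perm (Fin n), ¬ Contains132 π ∧ A.image π = B := by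
  exact key n A B h
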